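/- For the Tribonacci sequence and any k ≥ 3: 8·∑_{j=0}^{k} T(2j)² = 8·T(2k)² + T(2k−1)² + 6·T(2k−2)² − 2·T(2k−3)² − T(2k−5)². -/

import Mathlib

open Finset

theorem stmt12 (T : ℕ → ℤ) (h0 : T 0 = 0) (h1 : T 1 = 1) (h2 : T 2 = 1) (hT : ∀ n, 3 ≤ n → T n = T (n-1) + T (n-2) + T (n-3)) :
    ∀ k, 3 ≤ k → 8*∑ j ∈ range (k+1), (T (2*j))^2 = 8*(T (2*k))^2 + (T (2*k-1))^2 + 6*(T (2*k-2))^2 - 2*(T (2*k-3))^2 - (T (2*k-5))^2 := by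
  have hs : ∀ k, 3 ≤ k →
      T (2*k-2) = T (2*k-3) + T (2*k-4) + T (2*k-5) ∧
      T (2*k-1) = T (2*k-2) + T (2*k-3) + T (2*k-4) ∧
      T (2*k) = T (2*k-1) + T (2*k-2) + T (2*k-3) := by
    intro k hk
    refine ⟨?_, ?_, ?_⟩
    · have := hT (2*k-2) (by omega)
      rw [show 2*k-2-1 = 2*k-3 by omega, show 2*k-2-2 = 2*k-4 by omega, show 2*k-2-3 = 2*k-5 by omega] at this; exact this
    · have := hT (2*k-1) (by omega)
      rw [show 2*k-1-1 = 2*k-2 by omega, show 2*k-1-2 = 2*k-3 by omega, show 2*k-1-3 = 2*k-4 by omega] at this; exact this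
    · have := hT (2*k) (by omega)
      rw [show 2*k-1 = 2*k-1 by omega, show 2*k-2 = 2*k-2 by omega, show 2*k-3 = 2*k-3 by omega] at this; exact this
  intro k hk
  induction k, hk using Nat.le_induction with
  | base =>
    have h3 := hT 3 (by norm_num)
    have h4 := hT 4 (by norm_num)
    have h5 := hT 5 (by norm_num)
    have h6 := hT 6 (by norm_num)
    norm_num at h3 h4 h5 h6
    simp [Finset.sum_range_succ]
    rw [h6, h5, h4, h3, h0, h1, h2]; norm_num
  | succ k hk ih =>
    obtain ⟨hd, he, hf⟩ := hs k hk
    have hg : T (2*k+1) = T (2*k) + T (2*k-1) + T (2*k-2) := by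
      have := hT (2*k+1) (by omega); rw [show 2*k+1-1 = 2*k by omega, show 2*k+1-2 = 2*k-1 by omega, show 2*k+1-3 = 2*k-2 by omega] at this; exact this
    have hh : T (2*k+2) = T (2*k+1) + T (2*k) + T (2*k-1) := by
      have := hT (2*k+2) (by omega); rw [show 2*k+2-1 = 2*k+1 by omega, show 2*k+2-2 = 2*k by omega, show 2*k+2-3 = 2*k-1 by omega] at this; exact this
    have e1 : 2*(k+1) = 2*k+2 := by ring
    have e2 : 2*k+2-1 = 2*k+1 := by omega
    have e3 : 2*k+2-2 = 2*k := by omega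
    have e4 : 2*k+2-3 = 2*k-1 := by omega
    have e5 : 2*k+2-5 = 2*k-3 := by omega
    rw [Finset.sum_range_succ, e1, e2, e3, e4, e5]
    rw [hf, he, hd] at ih
    rw [hh, hg, hf, he, hd]
    linear_combination ih
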